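/- Let s and t be integers with min{s,t} ≥ 2, and let M be an (s,t)-spike of order m ≥ max{3s+t, s+3t} − 4. Then M is (2·min{s,t} − 1)-connected; that is, for every integer k with k < 2·min{s,t} − 1, there is no partition (P,Q) of E(M) with |P| ≥ k, |Q| ≥ k, and λ(P) ≤ k − 1. -/

import Mathlib

open Set Function

namespace Matroid

variable {α : Type*}

/-- A circuit of a matroid: a minimal dependent set. -/
def IsCircuit' (M : Matroid α) (C : Set α) : Prop := Minimal M.Dep C

/-- A cocircuit of a matroid: a circuit of the dual matroid. -/
def IsCocircuit' (M : Matroid α) (C : Set α) : Prop := M✶.IsCircuit' C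

/-- The `ℕ`-valued rank of a set `X` in a matroid `M`:
the size of a largest independent subset of `X`. -/
noncomputable def rk' (M : Matroid α) (X : Set α) : ℕ :=
  sSup {n : ℕ | ∃ I, M.Indep I ∧ I ⊆ X ∧ I.ncard = n}

/-- The connectivity function `λ(X) = r(X) + r(E − X) − r(M)`. -/
noncomputable def lam' (M : Matroid α) (X : Set α) : ℕ :=
  M.rk' X + M.rk' (M.E \ X) - M.rk' M.E

/-- The `(s,u,t,v)`-property: every `s`-element subset of the ground set is contained in a
circuit of size `u`, and every `t`-element subset is contained in a cocircuit of size `v`. -/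
def HasProp (M : Matroid α) (s u t v : ℕ) : Prop :=
  (∀ S ⊆ M.E, S.ncard = s → ∃ C, M.IsCircuit' C ∧ C.ncard = u ∧ S ⊆ C) ∧
  (∀ T ⊆ M.E, T.ncard = t → ∃ C, M.IsCocircuit' C ∧ C.ncard = v ∧ T ⊆ C)

/-- A `t`-echidna of order `n`: a family of `n` pairwise disjoint `2`-element subsets of the
ground set (spines) such that the union of any `t` spines is a circuit.
(A `t`-coechidna of `M` is a `t`-echidna of `M✶`.) -/
def IsEchidna (M : Matroid α) (t : ℕ) {n : ℕ} (S : Fin n → Set α) : Prop :=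
  (∀ i, S i ⊆ M.E) ∧ (∀ i, (S i).ncard = 2) ∧
  Pairwise (Function.onFun Disjoint S) ∧
  ∀ I : Finset (Fin n), I.card = t → M.IsCircuit' (⋃ i ∈ I, S i)

/-- `M` is an `(s,t)`-spike with associated partition `(A 1, …, A m)`: the `A i` are `m`
pairwise disjoint pairs partitioning the ground set, with `m ≥ max s t`, such that the union of
any `s` pairs is a circuit and the union of any `t` pairs is a cocircuit. -/
def IsSpike (M : Matroid α) (s t : ℕ) {m : ℕ} (A : Fin m → Set α) : Prop :=
  max s t ≤ m ∧ (⋃ i, A i) = M.E ∧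
  Pairwise (Function.onFun Disjoint A) ∧ (∀ i, (A i).ncard = 2) ∧
  (∀ I : Finset (Fin m), I.card = s → M.IsCircuit' (⋃ i ∈ I, A i)) ∧
  (∀ I : Finset (Fin m), I.card = t → M.IsCocircuit' (⋃ i ∈ I, A i))

variable {M : Matroid α} {C D K X : Set α} {e : α}

lemma IsCircuit'.ssubset_indep (h : M.IsCircuit' C) (hDC : D ⊆ C) (hne : D ≠ C) :
    M.Indep D := by
  by_contra hdep
  exact hne (hDC.antisymm (h.2 ⟨hdep, hDC.trans h.1.subset_ground⟩ hDC))

lemma exists_circuit'_subset (hXfin : X.Finite) (hX : M.Dep X) : ∃ C ⊆ X, M.IsCircuit' C := by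
  obtain ⟨C, hC, hmin⟩ := Set.Finite.exists_minimal (s := {Y | Y ⊆ X ∧ M.Dep Y})
    (hXfin.finite_subsets.subset (fun Y hY => hY.1)) ⟨X, Subset.rfl, hX⟩
  exact ⟨C, hC.1, hC.2, fun D hD hDC => hmin (y := D) ⟨hDC.trans hC.1, hD⟩ hDC⟩

lemma IsCircuit'.inter_cocircuit_ne_singleton (hC : M.IsCircuit' C) (hK : M.IsCocircuit' K)
    (hCK : C ∩ K = {e}) : False := by
  have heCK : e ∈ C ∩ K := hCK ▸ rfl
  have hCE : C ⊆ M.E := hC.1.subset_ground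
  have hKE : K ⊆ M.E := by simpa using hK.1.subset_ground
  have heE : e ∈ M.E := hKE heCK.2
  -- e is in the closure of C \ {e}
  have hCd : M.Indep (C \ {e}) := hC.ssubset_indep diff_subset
    (fun h => by rw [← h] at heCK; exact heCK.1.2 rfl)
  have hecl : e ∈ M.closure (C \ {e}) := by
    have hins : insert e (C \ {e}) = C := by
      rw [Set.insert_diff_singleton, Set.insert_eq_self.2 heCK.1]
    have := hCd.insert_dep_iff.1 (by rw [hins]; exact hC.1)
    exact this.1
  have hsub : C \ {e} ⊆ M.E \ K := by
    rintro x ⟨hxC, hxe⟩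
    exact ⟨hCE hxC, fun hxK => hxe (by have : x ∈ C ∩ K := ⟨hxC, hxK⟩; rwa [hCK] at this)⟩
  have hecl' : e ∈ M.closure (M.E \ K) := M.closure_subset_closure hsub hecl
  -- K \ {e} is coindependent
  have hKd : M.Coindep (K \ {e}) := hK.ssubset_indep diff_subset
    (fun h => by rw [← h] at heCK; exact heCK.2.2 rfl)
  have hclE : M.closure (M.E \ (K \ {e})) = M.E := hKd.closure_compl
  have hset : M.E \ (K \ {e}) = insert e (M.E \ K) := by
    ext x
    simp only [Set.mem_diff, Set.mem_singleton_iff, Set.mem_insert_iff, not_and, not_not]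
    constructor
    · rintro ⟨hxE, h2⟩
      by_cases hxK : x ∈ K
      · exact Or.inl (h2 hxK)
      · exact Or.inr ⟨hxE, hxK⟩
    · rintro (rfl | ⟨hxE, hxK⟩)
      · exact ⟨heE, fun _ => rfl⟩
      · exact ⟨hxE, fun h => absurd h hxK⟩
  rw [hset, closure_insert_eq_of_mem_closure hecl'] at hclE
  exact hK.1.not_indep ((coindep_iff_closure_compl_eq_ground hKE).2 hclE).indep


section Spike

variable {s t m : ℕ} {A : Fin m → Set α}

lemma IsSpike.arm_ncard (hA : M.IsSpike s t A) (i : Fin m) : (A i).ncard = 2 :=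
  hA.2.2.2.1 i

lemma IsSpike.arm_finite (hA : M.IsSpike s t A) (i : Fin m) : (A i).Finite :=
  Set.finite_of_ncard_ne_zero (by rw [hA.arm_ncard i]; norm_num)

lemma IsSpike.arm_nonempty (hA : M.IsSpike s t A) (i : Fin m) : (A i).Nonempty :=
  Set.nonempty_of_ncard_ne_zero (by rw [hA.arm_ncard i]; norm_num)

lemma IsSpike.ground_finite (hA : M.IsSpike s t A) : M.E.Finite :=
  hA.2.1 ▸ Set.finite_iUnion hA.arm_finite

lemma IsSpike.arm_subset_ground (hA : M.IsSpike s t A) (i : Fin m) : A i ⊆ M.E :=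
  hA.2.1 ▸ Set.subset_iUnion A i

lemma IsSpike.eq_of_mem (hA : M.IsSpike s t A) {i j : Fin m} (hi : e ∈ A i) (hj : e ∈ A j) :
    i = j := by
  by_contra hne
  exact Set.disjoint_left.1 (hA.2.2.1 hne) hi hj

lemma IsSpike.dual (hA : M.IsSpike s t A) : M✶.IsSpike t s A := by
  obtain ⟨h1, h2, h3, h4, h5, h6⟩ := hA
  refine ⟨by rwa [max_comm], by rwa [dual_ground], h3, h4, h6, ?_⟩
  intro I hI
  rw [IsCocircuit', dual_dual]
  exact h5 I hI

lemma IsSpike.ncard_biUnion (hA : M.IsSpike s t A) (G : Finset (Fin m)) :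
    (⋃ i ∈ G, A i).ncard = 2 * G.card := by
  classical
  induction G using Finset.induction_on with
  | empty => simp
  | insert _ _ ha ih =>
    rename_i a G
    have hfin : (⋃ i ∈ G, A i).Finite :=
      Set.Finite.biUnion G.finite_toSet (fun i _ => hA.arm_finite i)
    have hdis : Disjoint (A a) (⋃ i ∈ G, A i) := by
      rw [Set.disjoint_left]
      rintro z hz hz2
      simp only [Set.mem_iUnion] at hz2
      obtain ⟨j, hjG, hzj⟩ := hz2
      exact ha ((hA.eq_of_mem hz hzj) ▸ hjG)
    rw [Finset.set_biUnion_insert, Set.ncard_union_eq hdis (hA.arm_finite a) hfin,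
      hA.arm_ncard a, ih, Finset.card_insert_of_notMem ha]
    ring

lemma IsSpike.ncard_Z (hA : M.IsSpike s t A) (G F : Finset (Fin m)) (f : Fin m → α)
    (hf : ∀ i ∈ F \ G, f i ∈ A i) :
    ((⋃ i ∈ G, A i) ∪ f '' ↑(F \ G)).ncard = 2 * G.card + (F \ G).card := by
  classical
  have hinj : Set.InjOn f ↑(F \ G) := by
    intro i hi j hj hij
    exact hA.eq_of_mem (hf i (by simpa using hi)) (hij ▸ hf j (by simpa using hj))
  have hfin : (⋃ i ∈ G, A i).Finite :=
    Set.Finite.biUnion G.finite_toSet (fun i _ => hA.arm_finite i)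
  have hdis : Disjoint (⋃ i ∈ G, A i) (f '' ↑(F \ G)) := by
    rw [Set.disjoint_left]
    rintro z hz ⟨j, hj, rfl⟩
    simp only [Set.mem_iUnion] at hz
    obtain ⟨i, hiG, hzi⟩ := hz
    rw [Finset.mem_coe, Finset.mem_sdiff] at hj
    exact hj.2 ((hA.eq_of_mem hzi (hf j (by simpa [Finset.mem_sdiff] using hj))) ▸ hiG)
  rw [Set.ncard_union_eq hdis hfin ((F \ G).finite_toSet.image f), hA.ncard_biUnion G,
    Set.ncard_image_of_injOn hinj, Set.ncard_coe_finset]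

end Spike


section Spike2

variable {s t m : ℕ} {A : Fin m → Set α}

lemma IsSpike.indep_Z (hA : M.IsSpike s t A) (G F : Finset (Fin m)) (hGF : G ⊆ F)
    (hG : G.card + 1 ≤ s) (hF : F.card + t ≤ m + 1) (ht : 1 ≤ t)
    (f : Fin m → α) (hf : ∀ i ∈ F \ G, f i ∈ A i) :
    M.Indep ((⋃ i ∈ G, A i) ∪ f '' ↑(F \ G)) := by
  classical
  set Z := (⋃ i ∈ G, A i) ∪ f '' ↑(F \ G) with hZdef
  have hZE : Z ⊆ M.E := by
    apply Set.union_subset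
    · exact Set.iUnion₂_subset (fun i _ => hA.arm_subset_ground i)
    · rintro z ⟨j, hj, rfl⟩
      exact hA.arm_subset_ground j (hf j (by simpa using hj))
  have hZfin : Z.Finite :=
    (Set.Finite.biUnion G.finite_toSet (fun i _ => hA.arm_finite i)).union
      ((F \ G).finite_toSet.image f)
  -- Z ∩ A i ⊆ {f i} for i ∉ G
  have hZcap : ∀ i : Fin m, i ∉ G → Z ∩ A i ⊆ {f i} := by
    rintro i hiG z ⟨hzZ, hzi⟩
    rcases hzZ with hz | ⟨j, hj, rfl⟩
    · simp only [Set.mem_iUnion] at hz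
      obtain ⟨g, hgG, hzg⟩ := hz
      exact absurd ((hA.eq_of_mem hzg hzi) ▸ hgG) hiG
    · rw [Finset.mem_coe, Finset.mem_sdiff] at hj
      rw [hA.eq_of_mem (hf j (by simpa [Finset.mem_sdiff] using hj)) hzi]
      rfl
  by_contra hni
  obtain ⟨C, hCZ, hC⟩ := exists_circuit'_subset hZfin ((not_indep_iff hZE).1 hni)
  by_cases hcase : ∃ e ∈ C, e ∈ f '' ↑(F \ G)
  · -- circuit meets the transversal part: orthogonality contradiction
    obtain ⟨e, heC, j0, hj0, rfl⟩ := hcase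
    rw [Finset.mem_coe] at hj0
    have hj0F : j0 ∈ F := (Finset.mem_sdiff.1 hj0).1
    obtain ⟨T', hT'sub, hT'card⟩ := Finset.exists_subset_card_eq (s := Finset.univ \ F) (n := t - 1) (by
      rw [Finset.card_sdiff_of_subset (Finset.subset_univ F), Finset.card_univ, Fintype.card_fin]; omega)
    have hj0T' : j0 ∉ T' := fun h => (Finset.mem_sdiff.1 (hT'sub h)).2 hj0F
    set T : Finset (Fin m) := insert j0 T' with hTdef
    have hTcard : T.card = t := by
      rw [hTdef, Finset.card_insert_of_notMem hj0T', hT'card]; omega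
    have hK := hA.2.2.2.2.2 T hTcard
    refine hC.inter_cocircuit_ne_singleton hK (e := f j0) ?_
    apply Set.Subset.antisymm
    · rintro z ⟨hzC, hzT⟩
      simp only [Set.mem_iUnion] at hzT
      obtain ⟨j, hjT, hzj⟩ := hzT
      have hjF : j = j0 ∨ j ∉ F := by
        rcases Finset.mem_insert.1 hjT with h | h
        · exact Or.inl h
        · exact Or.inr (Finset.mem_sdiff.1 (hT'sub h)).2
      have hzZ : z ∈ Z := hCZ hzC
      rcases hzZ with hz | ⟨i, hi, rfl⟩
      · simp only [Set.mem_iUnion] at hz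
        obtain ⟨g, hgG, hzg⟩ := hz
        have : g = j := hA.eq_of_mem hzg hzj
        rcases hjF with rfl | hjF
        · exact absurd (this ▸ hgG) (Finset.mem_sdiff.1 hj0).2
        · exact absurd (this ▸ hgG) (fun h => hjF (hGF (this ▸ h)))
      · rw [Finset.mem_coe, Finset.mem_sdiff] at hi
        have hij : i = j := hA.eq_of_mem (hf i (by simpa [Finset.mem_sdiff] using hi)) hzj
        rcases hjF with rfl | hjF
        · rw [hij]; rfl
        · exact absurd (hij ▸ hi.1) hjF
    · rintro z (rfl : z = f j0)
      refine ⟨heC, ?_⟩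
      simp only [Set.mem_iUnion]
      exact ⟨j0, Finset.mem_insert_self _ _, hf j0 hj0⟩
  · -- circuit inside the full arms: contradicts minimality of an s-arm circuit
    push_neg at hcase
    have hCsub : C ⊆ ⋃ i ∈ G, A i := by
      intro z hz
      rcases hCZ hz with h | h
      · exact h
      · exact absurd h (hcase z hz)
    obtain ⟨H, hGH, -, hHcard⟩ := Finset.exists_subsuperset_card_eq (n := s) (Finset.subset_univ G)
      (by omega) (by rw [Finset.card_univ, Fintype.card_fin]; exact le_trans (le_max_left s t) hA.1)
    have hCs := hA.2.2.2.2.1 H hHcard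
    have hsub2 : (⋃ i ∈ H, A i) ⊆ C := hCs.2 hC.1
      (hCsub.trans (Set.biUnion_subset_biUnion_left (fun i hi => hGH hi)))
    obtain ⟨i, hiH, hiG⟩ : ∃ i ∈ H, i ∉ G := by
      by_contra h
      push_neg at h
      have : H ⊆ G := h
      have := Finset.card_le_card this
      omega
    have hAiZ : A i ⊆ {f i} := by
      intro a ha
      exact hZcap i hiG ⟨hCZ (hsub2 (Set.mem_biUnion hiH ha)), ha⟩
    have := Set.ncard_le_ncard hAiZ (Set.finite_singleton _)
    rw [hA.arm_ncard i, Set.ncard_singleton] at this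
    omega

end Spike2


variable {I Z : Set α}

lemma le_rk' (hE : M.E.Finite) (hI : M.Indep I) (hIX : I ⊆ X) : I.ncard ≤ M.rk' X :=
  le_csSup ⟨M.E.ncard, by
    rintro n ⟨J, hJ, -, rfl⟩
    exact Set.ncard_le_ncard hJ.subset_ground hE⟩ ⟨I, hI, hIX, rfl⟩

lemma rk'_le {n : ℕ} (hub : ∀ I, M.Indep I → I ⊆ X → I.ncard ≤ n) : M.rk' X ≤ n :=
  csSup_le ⟨0, ∅, M.empty_indep, Set.empty_subset X, by simp⟩
    (by rintro b ⟨J, hJ, hJX, rfl⟩; exact hub J hJ hJX)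

lemma rk'_ground_le_of_coindep (hE : M.E.Finite) (hZ : M✶.Indep Z) :
    M.rk' M.E + Z.ncard ≤ M.E.ncard := by
  have hZE : Z ⊆ M.E := by simpa using hZ.subset_ground
  obtain ⟨B, hB, hBZ⟩ := Matroid.Coindep.exists_isBase_subset_compl hZ
  have h1 : M.rk' M.E ≤ B.ncard := by
    apply rk'_le
    intro I hI hIX
    obtain ⟨B', hB', hIB'⟩ := Matroid.Indep.exists_isBase_superset hI
    calc I.ncard ≤ B'.ncard := Set.ncard_le_ncard hIB' (hE.subset hB'.subset_ground)
    _ = B.ncard := hB'.ncard_eq_ncard_of_isBase hB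
  have h2 : B.ncard ≤ (M.E \ Z).ncard := Set.ncard_le_ncard hBZ (hE.subset Set.diff_subset)
  have h3 : (M.E \ Z).ncard = M.E.ncard - Z.ncard := Set.ncard_diff hZE (hE.subset hZE)
  have h4 : Z.ncard ≤ M.E.ncard := Set.ncard_le_ncard hZE hE
  omega



section Main

variable {s t m : ℕ} {A : Fin m → Set α}

lemma IsSpike.rk'_lower (hA : M.IsSpike s t A) (hs : 2 ≤ s) (ht : 1 ≤ t)
    (htm : t ≤ m) (hstm : s + t ≤ m + 2)
    (S : Set α) (pS W : Finset (Fin m)) (f : Fin m → α)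
    (hdisjSW : Disjoint pS W) (hfull : ∀ i ∈ pS, A i ⊆ S)
    (hsel : ∀ i ∈ pS ∪ W, f i ∈ A i ∩ S) :
    min pS.card (s - 1) + min (pS.card + W.card) (m - t + 1) ≤ M.rk' S := by
  classical
  obtain ⟨G, hGsub, hGcard⟩ := Finset.exists_subset_card_eq (s := pS) (n := min pS.card (s-1))
    (min_le_left _ _)
  have hcard_union : (pS ∪ W).card = pS.card + W.card :=
    Finset.card_union_of_disjoint hdisjSW
  obtain ⟨F, hGF, hFsub, hFcard⟩ := Finset.exists_subsuperset_card_eq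
    (n := min (pS.card + W.card) (m - t + 1))
    (hGsub.trans (Finset.subset_union_left : pS ⊆ pS ∪ W))
    (by omega) (by omega)
  have hf' : ∀ i ∈ F \ G, f i ∈ A i :=
    fun i hi => (hsel i (hFsub (Finset.mem_sdiff.1 hi).1)).1
  have hind := hA.indep_Z G F hGF (by omega) (by omega) (by omega) f hf'
  have hsub : ((⋃ i ∈ G, A i) ∪ f '' ↑(F \ G)) ⊆ S := by
    apply Set.union_subset
    · exact Set.iUnion₂_subset (fun i hi => hfull i (hGsub hi))
    · rintro z ⟨j, hj, rfl⟩
      exact (hsel j (hFsub (Finset.mem_sdiff.1 (by simpa using hj)).1)).2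
  have hle := le_rk' hA.ground_finite hind hsub
  rw [hA.ncard_Z G F f hf'] at hle
  have hFG : (F \ G).card = min (pS.card + W.card) (m - t + 1) - min pS.card (s-1) := by
    rw [Finset.card_sdiff_of_subset hGF, hFcard, hGcard]
  omega

lemma IsSpike.ncard_upper (hA : M.IsSpike s t A)
    (S : Set α) (pS W : Finset (Fin m)) (f : Fin m → α)
    (hdisjSW : Disjoint pS W) (hfullIff : ∀ i, i ∈ pS ↔ A i ⊆ S)
    (hsel : ∀ i ∈ pS ∪ W, f i ∈ A i ∩ S)
    (hWof : ∀ (i : Fin m) (a : α), a ∈ A i → a ∈ S → ¬ A i ⊆ S → i ∈ W)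
    (hSE : S ⊆ M.E) : S.ncard ≤ 2 * pS.card + W.card := by
  classical
  have hWsd : (pS ∪ W) \ pS = W := Finset.union_sdiff_cancel_left hdisjSW
  have hf' : ∀ i ∈ (pS ∪ W) \ pS, f i ∈ A i := by
    rw [hWsd]; exact fun i hi => (hsel i (Finset.mem_union_right _ hi)).1
  have hcover : S ⊆ (⋃ i ∈ pS, A i) ∪ f '' ↑((pS ∪ W) \ pS) := by
    intro a haS
    have haE := hSE haS
    rw [← hA.2.1] at haE
    obtain ⟨i, hai⟩ := Set.mem_iUnion.1 haE
    by_cases hiS : A i ⊆ S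
    · exact Or.inl (Set.mem_biUnion ((hfullIff i).2 hiS) hai)
    · have hiW : i ∈ W := hWof i a hai haS hiS
      have hfi := hsel i (Finset.mem_union_right _ hiW)
      by_cases hafi : a = f i
      · exact Or.inr ⟨i, by rw [hWsd]; exact hiW, hafi.symm⟩
      · exfalso
        have hpair : ({a, f i} : Set α) ⊆ A i := by
          rintro z (rfl | rfl)
          · exact hai
          · exact hfi.1
        have h2 : ({a, f i} : Set α).ncard = 2 := Set.ncard_pair hafi
        have heq := Set.eq_of_subset_of_ncard_le hpair
          (by rw [hA.arm_ncard i, h2]) (hA.arm_finite i)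
        apply hiS
        rw [← heq]
        rintro z (rfl | rfl)
        · exact haS
        · exact hfi.2
  have hfin : ((⋃ i ∈ pS, A i) ∪ f '' ↑((pS ∪ W) \ pS)).Finite :=
    (Set.Finite.biUnion pS.finite_toSet (fun i _ => hA.arm_finite i)).union
      (((pS ∪ W) \ pS).finite_toSet.image f)
  have hle := Set.ncard_le_ncard hcover hfin
  rw [hA.ncard_Z pS (pS ∪ W) f hf', hWsd] at hle
  exact hle

lemma IsSpike.ncard_ground (hA : M.IsSpike s t A) : M.E.ncard = 2 * m := by
  have h1 : (⋃ i ∈ (Finset.univ : Finset (Fin m)), A i) = ⋃ i, A i := by simp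
  rw [← hA.2.1, ← h1, hA.ncard_biUnion, Finset.card_univ, Fintype.card_fin]

lemma IsSpike.rk'_ground_upper (hA : M.IsSpike s t A) (hs : 1 ≤ s) (ht : 1 ≤ t)
    (hsm : s ≤ m) (htm : t ≤ m) (hstm : s + t ≤ m + 2) :
    M.rk' M.E + (2 * (t - 1) + ((m - s + 1) - (t - 1))) ≤ 2 * m := by
  classical
  have hdual := hA.dual
  obtain ⟨Gd, hGdsub, hGdcard⟩ := Finset.exists_subset_card_eq (s := (Finset.univ : Finset (Fin m)))
    (n := t - 1) (by rw [Finset.card_univ, Fintype.card_fin]; omega)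
  obtain ⟨Fd, hGFd, hFdsub, hFdcard⟩ := Finset.exists_subsuperset_card_eq
    (n := m - s + 1) hGdsub (by omega) (by rw [Finset.card_univ, Fintype.card_fin]; omega)
  have hfd : ∀ i ∈ Fd \ Gd, (fun j : Fin m => (hA.arm_nonempty j).choose) i ∈ A i :=
    fun i _ => (hA.arm_nonempty i).choose_spec
  have hindd := hdual.indep_Z Gd Fd hGFd (by omega) (by omega) (by omega)
    (fun j : Fin m => (hA.arm_nonempty j).choose) hfd
  have hrE := rk'_ground_le_of_coindep hA.ground_finite hindd
  rw [hdual.ncard_Z Gd Fd (fun j : Fin m => (hA.arm_nonempty j).choose) hfd] at hrE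
  have hFGd : (Fd \ Gd).card = (m - s + 1) - (t - 1) := by
    rw [Finset.card_sdiff_of_subset hGFd, hFdcard, hGdcard]
  rw [hA.ncard_ground, hGdcard, hFGd] at hrE
  exact hrE

end Main

end Matroid

universe u

open Matroid

lemma spike_arith (s t m p q x k rP rQ rE : ℕ)
    (hs : 2 ≤ s) (ht : 2 ≤ t) (hm : max (3*s+t) (s+3*t) - 4 ≤ m)
    (hsm : s ≤ m) (htm : t ≤ m)
    (hcard : p + q + x = m)
    (hrP : min p (s-1) + min (p+x) (m-t+1) ≤ rP)
    (hrQ : min q (s-1) + min (q+x) (m-t+1) ≤ rQ)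
    (hrE : rE + (2*(t-1) + ((m-s+1) - (t-1))) ≤ 2*m)
    (hkP : k ≤ 2*p+x) (hkQ : k ≤ 2*q+x)
    (hk : k < 2 * min s t - 1)
    (hl : ((rP + rQ - rE : ℕ) : ℤ) ≤ (k:ℤ) - 1) : False := by
  omega

/-- If `min{s,t} ≥ 2` and `M` is an `(s,t)`-spike of order
`m ≥ max{3s+t, s+3t} − 4`, then `M` is `(2·min{s,t} − 1)`-connected: for every `k` with
`k < 2·min{s,t} − 1` there is no partition `(P,Q)` of `E(M)` with `|P| ≥ k`, `|Q| ≥ k` and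
`λ(P) ≤ k − 1`. -/
theorem statement18 {α : Type u} (s t m : ℕ) (hs : 2 ≤ s) (ht : 2 ≤ t)
    (M : Matroid α) (A : Fin m → Set α) (hA : M.IsSpike s t A)
    (hm : max (3 * s + t) (s + 3 * t) - 4 ≤ m) :
    ∀ k : ℕ, k < 2 * min s t - 1 →
      ¬ ∃ P Q : Set α, P ∪ Q = M.E ∧ Disjoint P Q ∧
        k ≤ P.ncard ∧ k ≤ Q.ncard ∧ (M.lam' P : ℤ) ≤ (k : ℤ) - 1 := by
  intro k hk
  rintro ⟨P, Q, hPQ, hdisjPQ, hkP, hkQ, hlam⟩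
  classical
  have hsm : s ≤ m := le_trans (le_max_left s t) hA.1
  have htm : t ≤ m := le_trans (le_max_right s t) hA.1
  have hstm : s + t ≤ m + 2 := by omega
  have hPE : P ⊆ M.E := hPQ ▸ Set.subset_union_left
  have hQE : Q ⊆ M.E := hPQ ▸ Set.subset_union_right
  have hQE' : M.E \ P = Q := by
    rw [← hPQ, Set.union_diff_left, hdisjPQ.symm.sdiff_eq_left]
  set pP : Finset (Fin m) := Finset.univ.filter (fun i => A i ⊆ P) with hpPdef
  set pQ : Finset (Fin m) := Finset.univ.filter (fun i => A i ⊆ Q) with hpQdef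
  set W : Finset (Fin m) := Finset.univ \ (pP ∪ pQ) with hWdef
  have hdisj_pq : Disjoint pP pQ := by
    rw [Finset.disjoint_left]
    intro i hiP hiQ
    obtain ⟨a, ha⟩ := hA.arm_nonempty i
    exact Set.disjoint_left.1 hdisjPQ ((Finset.mem_filter.1 hiP).2 ha)
      ((Finset.mem_filter.1 hiQ).2 ha)
  have hdisj_PW : Disjoint pP W := Finset.disjoint_sdiff.mono_left Finset.subset_union_left
  have hdisj_QW : Disjoint pQ W := Finset.disjoint_sdiff.mono_left Finset.subset_union_right
  have hcard_m : pP.card + pQ.card + W.card = m := by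
    have h1 : (pP ∪ pQ).card = pP.card + pQ.card := Finset.card_union_of_disjoint hdisj_pq
    have h2 : W.card = m - (pP.card + pQ.card) := by
      rw [hWdef, Finset.card_sdiff_of_subset (Finset.subset_univ _), Finset.card_univ,
        Fintype.card_fin, h1]
    have h3 : pP.card + pQ.card ≤ m := by
      have := Finset.card_le_card (Finset.subset_univ (pP ∪ pQ))
      rw [h1, Finset.card_univ, Fintype.card_fin] at this
      exact this
    omega
  have hWmem : ∀ i : Fin m, i ∈ W ↔ (¬ A i ⊆ P ∧ ¬ A i ⊆ Q) := by
    intro i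
    rw [hWdef, Finset.mem_sdiff, Finset.mem_union, hpPdef, hpQdef]
    simp [Finset.mem_filter]
  have hchoice : ∀ S : Set α, ∃ f : Fin m → α, ∀ i, (A i ∩ S).Nonempty → f i ∈ A i ∩ S := by
    intro S
    have h : ∀ i : Fin m, ∃ z : α, ((A i ∩ S).Nonempty → z ∈ A i ∩ S) := by
      intro i
      by_cases h : (A i ∩ S).Nonempty
      · exact ⟨h.choose, fun _ => h.choose_spec⟩
      · exact ⟨(hA.arm_nonempty i).choose, fun h' => absurd h' h⟩
    exact ⟨fun i => (h i).choose, fun i => (h i).choose_spec⟩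
  obtain ⟨fP, hfP⟩ := hchoice P
  obtain ⟨fQ, hfQ⟩ := hchoice Q
  have hsplitP : ∀ i ∈ pP ∪ W, (A i ∩ P).Nonempty := by
    intro i hi
    rcases Finset.mem_union.1 hi with hi | hi
    · obtain ⟨a, ha⟩ := hA.arm_nonempty i
      exact ⟨a, ha, (Finset.mem_filter.1 hi).2 ha⟩
    · obtain ⟨hnP, hnQ⟩ := (hWmem i).1 hi
      obtain ⟨a, haA, haQ⟩ := Set.not_subset.1 hnQ
      have haE : a ∈ P ∪ Q := hPQ ▸ hA.arm_subset_ground i haA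
      rcases haE with haP | haQ'
      · exact ⟨a, haA, haP⟩
      · exact absurd haQ' haQ
  have hsplitQ : ∀ i ∈ pQ ∪ W, (A i ∩ Q).Nonempty := by
    intro i hi
    rcases Finset.mem_union.1 hi with hi | hi
    · obtain ⟨a, ha⟩ := hA.arm_nonempty i
      exact ⟨a, ha, (Finset.mem_filter.1 hi).2 ha⟩
    · obtain ⟨hnP, hnQ⟩ := (hWmem i).1 hi
      obtain ⟨a, haA, haP⟩ := Set.not_subset.1 hnP
      have haE : a ∈ P ∪ Q := hPQ ▸ hA.arm_subset_ground i haA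
      rcases haE with haP' | haQ
      · exact absurd haP' haP
      · exact ⟨a, haA, haQ⟩
  have hrP := hA.rk'_lower hs (by omega) htm hstm P pP W fP hdisj_PW
    (fun i hi => (Finset.mem_filter.1 hi).2) (fun i hi => hfP i (hsplitP i hi))
  have hrQ := hA.rk'_lower hs (by omega) htm hstm Q pQ W fQ hdisj_QW
    (fun i hi => (Finset.mem_filter.1 hi).2) (fun i hi => hfQ i (hsplitQ i hi))
  rw [← hQE'] at hrQ
  have hrE := hA.rk'_ground_upper (by omega) (by omega) hsm htm hstm
  have hPcard : P.ncard ≤ 2 * pP.card + W.card := by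
    refine hA.ncard_upper P pP W fP hdisj_PW (fun i => by simp [hpPdef, Finset.mem_filter])
      (fun i hi => hfP i (hsplitP i hi)) ?_ hPE
    intro i a hai haP hnsub
    refine (hWmem i).2 ⟨hnsub, fun hq => ?_⟩
    exact Set.disjoint_left.1 hdisjPQ haP (hq hai)
  have hQcard : Q.ncard ≤ 2 * pQ.card + W.card := by
    refine hA.ncard_upper Q pQ W fQ hdisj_QW (fun i => by simp [hpQdef, Finset.mem_filter])
      (fun i hi => hfQ i (hsplitQ i hi)) ?_ hQE
    intro i a hai haQ hnsub
    refine (hWmem i).2 ⟨fun hp => ?_, hnsub⟩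
    exact Set.disjoint_left.1 hdisjPQ (hp hai) haQ
  have hlam2 : M.lam' P = M.rk' P + M.rk' (M.E \ P) - M.rk' M.E := rfl
  rw [hlam2] at hlam
  exact spike_arith s t m pP.card pQ.card W.card k (M.rk' P) (M.rk' (M.E \ P)) (M.rk' M.E)
    hs ht hm hsm htm hcard_m hrP hrQ hrE (le_trans hkP hPcard) (le_trans hkQ hQcard) hk hlam
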